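/- Let (X, f) be a connectivity system with f({e}) ≤ k for every e ∈ X. If L is a linear tangle of order k+1 on (X, f), then the family S = { A ⊆ X : X \ A ∈ L } is a single ultrafilter of order k+1 on (X, f). -/

import Mathlib

open Finset

def SymmSubmodular {α : Type*} [Fintype α] [DecidableEq α] (f : Finset α → ℕ) : Prop :=
  (∀ A : Finset α, f A = f Aᶜ) ∧
  ∀ A B : Finset α, f (A ∩ B) + f (A ∪ B) ≤ f A + f B

def LinearTangle {α : Type*} [Fintype α] [DecidableEq α]
    (f : Finset α → ℕ) (k : ℕ) (L : Set (Finset α)) : Prop :=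
  (∀ A ∈ L, f A ≤ k) ∧
  (∅ : Finset α) ∈ L ∧
  (∀ A : Finset α, f A ≤ k → (A ∈ L ↔ Aᶜ ∉ L)) ∧
  ∀ A ∈ L, ∀ B ∈ L, ∀ e : α, f {e} ≤ k → A ∪ B ∪ {e} ≠ Finset.univ

def SingleFilter {α : Type*} [Fintype α] [DecidableEq α]
    (f : Finset α → ℕ) (k : ℕ) (S : Set (Finset α)) : Prop :=
  (∀ A ∈ S, ∀ e : α, f {e} ≤ k → f (A \ {e}) ≤ k → A \ {e} ∈ S) ∧
  (∀ A ∈ S, ∀ B : Finset α, A ⊆ B → f B ≤ k → B ∈ S) ∧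
  (∅ : Finset α) ∉ S

def SingleUltrafilter {α : Type*} [Fintype α] [DecidableEq α]
    (f : Finset α → ℕ) (k : ℕ) (S : Set (Finset α)) : Prop :=
  SingleFilter f k S ∧ ∀ A : Finset α, f A ≤ k → A ∈ S ∨ Aᶜ ∈ S

theorem stmt3 {α : Type*} [Fintype α] [DecidableEq α] (f : Finset α → ℕ) (k : ℕ)
    (hf : SymmSubmodular f) (hsing : ∀ e : α, f {e} ≤ k)
    (L : Set (Finset α)) (hL : LinearTangle f k L) :
    SingleUltrafilter f k {A : Finset α | Aᶜ ∈ L} := by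
  obtain ⟨hL0, hL1, hL2, hL3⟩ := hL
  have huniv : (Finset.univ : Finset α) ∉ L := by
    intro h
    have h2 := (hL2 _ (hL0 _ h)).mp h
    simp only [Finset.compl_univ] at h2
    exact h2 hL1
  refine ⟨⟨?_, ?_, ?_⟩, ?_⟩
  · -- S1
    intro A hA e he hfe
    simp only [Set.mem_setOf_eq] at hA ⊢
    have hc : (A \ {e})ᶜ = Aᶜ ∪ {e} := by
      ext x; simp [Finset.mem_sdiff, em]; tauto
    rw [hc]
    have hfc : f (Aᶜ ∪ {e}) ≤ k := by
      rw [hf.1, compl_union, compl_compl]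
      rw [show A ∩ {e}ᶜ = A \ {e} by ext x; simp]; exact hfe
    by_contra hnot
    have hmem : (Aᶜ ∪ {e})ᶜ ∈ L := by
      have := hL2 _ hfc; tauto
    have : Aᶜ ∪ (Aᶜ ∪ {e})ᶜ ∪ {e} = Finset.univ := by
      ext x; simp [em]; tauto
    exact hL3 _ hA _ hmem e he this
  · -- S2
    intro A hA B hAB hfB
    simp only [Set.mem_setOf_eq] at hA ⊢
    have hne : Nonempty α := by
      by_contra h
      have : IsEmpty α := not_nonempty_iff.mp h
      rw [Finset.univ_eq_empty] at huniv
      exact huniv hL1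
    obtain ⟨e⟩ := hne
    by_contra hnot
    have hB : B ∈ L := by
      have h2 := hL2 Bᶜ (by rw [← hf.1]; exact hfB)
      rw [compl_compl] at h2
      tauto
    have : Aᶜ ∪ B ∪ {e} = Finset.univ := by
      ext x; simp
      by_cases hx : x ∈ A
      · exact Or.inr (Or.inr (hAB hx))
      · exact Or.inr (Or.inl hx)
    exact hL3 _ hA _ hB e (hsing e) this
  · -- S3
    simp only [Set.mem_setOf_eq, Finset.compl_empty]
    exact huniv
  · -- S4
    intro A hfA
    simp only [Set.mem_setOf_eq, compl_compl]
    rcases em (Aᶜ ∈ L) with h | h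
    · exact Or.inl h
    · exact Or.inr ((hL2 A hfA).mpr h)
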